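/- A commutative ring R with identity is von Neumann regular if and only if its Anderson ring R[X]_A is semi-hereditary, i.e., every finitely generated ideal of R[X]_A is projective as an R[X]_A-module. -/

import Mathlib

open Polynomial

/-- The multiplicative set `A = {f ∈ R[X] : f(0) = 1}` of polynomials
with constant term `1`. -/
def andersonSubmonoid (R : Type*) [CommRing R] : Submonoid (Polynomial R) where
  carrier := {f | f.coeff 0 = 1}
  one_mem' := by simp
  mul_mem' := by
    intro a b ha hb
    simp only [Set.mem_setOf_eq, Polynomial.mul_coeff_zero] at *
    rw [ha, hb, mul_one]

/-- The Anderson ring `R[X]_A`, the localization of `R[X]` at `A`. -/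
abbrev AndersonRing (R : Type*) [CommRing R] := Localization (andersonSubmonoid R)

/-- The canonical ring homomorphism `R → R[X]_A`. -/
noncomputable def andersonMap (R : Type*) [CommRing R] : R →+* AndersonRing R :=
  (algebraMap (Polynomial R) (AndersonRing R)).comp Polynomial.C

section Basic

variable {R : Type*} [CommRing R]

local notation "ι" => algebraMap (Polynomial R) (AndersonRing R)

lemma mem_andersonSubmonoid {f : R[X]} : f ∈ andersonSubmonoid R ↔ f.coeff 0 = 1 :=
  Iff.rfl

/-- polynomials with unit constant term become units -/
lemma isUnit_iota_of_coeff_zero {g : R[X]} (h : IsUnit (g.coeff 0)) : IsUnit (ι g) := by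
  obtain ⟨v, hv⟩ := h.exists_right_inv
  have hmem : C v * g ∈ andersonSubmonoid R := by
    rw [mem_andersonSubmonoid, mul_coeff_zero, coeff_C_zero, mul_comm, hv]
  have hu : IsUnit (ι (C v * g)) := IsLocalization.map_units _ ⟨C v * g, hmem⟩
  rw [map_mul] at hu
  exact isUnit_of_mul_isUnit_right hu

/-- every element of the Anderson ring is `ι g` divided by a unit -/
lemma exists_denom (z : AndersonRing R) :
    ∃ (s : andersonSubmonoid R) (g : R[X]), z * ι (s : R[X]) = ι g := by
  obtain ⟨⟨g, s⟩, h⟩ := IsLocalization.surj (andersonSubmonoid R) z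
  exact ⟨s, g, h⟩

/-- X is a nonzerodivisor in R[X] -/
lemma X_mul_eq_zero' {g : R[X]} (h : X * g = 0) : g = 0 := by
  ext n
  have := congrArg (fun p => Polynomial.coeff p (n + 1)) h
  simpa [coeff_X_mul] using this

/-- X is a nonzerodivisor in the Anderson ring -/
lemma iotaX_mul_eq_zero {z : AndersonRing R} (h : ι X * z = 0) : z = 0 := by
  obtain ⟨s, g, hg⟩ := exists_denom z
  have h1 : ι (X * g) = 0 := by
    rw [map_mul, ← hg]
    calc ι X * (z * ι (s:R[X])) = (ι X * z) * ι (s:R[X]) := by ring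
    _ = 0 := by rw [h, zero_mul]
  rw [IsLocalization.map_eq_zero_iff (andersonSubmonoid R)] at h1
  obtain ⟨m, hm⟩ := h1
  have : X * ((m : R[X]) * g) = 0 := by rw [← mul_assoc, mul_comm X (m:R[X]), mul_assoc]; exact hm
  have hmg : (m : R[X]) * g = 0 := X_mul_eq_zero' this
  have : ι ((m : R[X]) * g) = 0 := by rw [hmg, map_zero]
  rw [map_mul] at this
  have hu : IsUnit (ι (m : R[X])) := IsLocalization.map_units _ m
  have hg0 : ι g = 0 := by
    obtain ⟨v, hv⟩ := hu.exists_right_inv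
    calc ι g = (ι (m:R[X]) * v) * ι g := by rw [hv, one_mul]
    _ = (ι (m:R[X]) * ι g) * v := by ring
    _ = 0 := by rw [this, zero_mul]
  rw [hg0] at hg
  have hus : IsUnit (ι (s : R[X])) := IsLocalization.map_units _ s
  obtain ⟨v, hv⟩ := hus.exists_right_inv
  calc z = z * (ι (s:R[X]) * v) := by rw [hv, mul_one]
  _ = (z * ι (s:R[X])) * v := by ring
  _ = 0 := by rw [hg, zero_mul]

end Basic

section Special

variable {R : Type*} [CommRing R]

local notation "ι" => algebraMap (Polynomial R) (AndersonRing R)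

/-- canonical "special" elements of the Anderson ring -/
inductive IsSpecial : AndersonRing R → Prop
  | zero : IsSpecial 0
  | step (e w : AndersonRing R) (he : e * e = e) (hw : IsSpecial w) :
      IsSpecial (e + (1 - e) * (algebraMap (Polynomial R) (AndersonRing R) X) * w)

/-- the annihilator of a special element is generated by an idempotent -/
lemma special_ann {w : AndersonRing R} (hw : IsSpecial w) :
    ∃ c : AndersonRing R, c * c = c ∧ ∀ z, w * z = 0 ↔ ∃ y, z = c * y := by
  induction hw with
  | zero =>
      exact ⟨1, one_mul 1, fun z => ⟨fun _ => ⟨z, (one_mul z).symm⟩, fun _ => zero_mul z⟩⟩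
  | step e w' he hw' ih =>
      obtain ⟨c', hc', hann⟩ := ih
      refine ⟨(1 - e) * c', by linear_combination (c' * c') * he + (1 - e) * hc', fun z => ?_⟩
      constructor
      · intro h
        have hez : e * z = 0 := by
          have h4 : e * ((e + (1 - e) * ι X * w') * z) = 0 := by rw [h, mul_zero]
          calc e * z = e * ((e + (1 - e) * ι X * w') * z) := by
                linear_combination (ι X * w' * z - z) * he
          _ = 0 := h4
        have h2 : ι X * (w' * ((1 - e) * z)) = 0 := by
          calc ι X * (w' * ((1 - e) * z)) = (e + (1 - e) * ι X * w') * z - e * z := by ring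
          _ = 0 := by rw [h, hez, sub_zero]
        have h3 : w' * ((1 - e) * z) = 0 := iotaX_mul_eq_zero h2
        obtain ⟨y, hy⟩ := (hann _).mp h3
        refine ⟨y, ?_⟩
        calc z = (1 - e) * ((1 - e) * z) := by linear_combination (2 - e) * hez
        _ = (1 - e) * (c' * y) := by rw [hy]
        _ = (1 - e) * c' * y := by ring
      · rintro ⟨y, hy⟩
        have hwc : w' * c' = 0 := (hann c').mpr ⟨1, (mul_one c').symm⟩
        rw [hy]
        calc (e + (1 - e) * ι X * w') * ((1 - e) * c' * y)
            = (e - e * e) * c' * y + (1 - e) * (1 - e) * ι X * y * (w' * c') := by ring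
        _ = 0 := by rw [he, hwc]; ring

/-- principal ideals generated by special elements are projective -/
lemma special_projective {w : AndersonRing R} (hw : IsSpecial w) :
    Module.Projective (AndersonRing R) (Ideal.span {w}) := by
  obtain ⟨c, hc, hann⟩ := special_ann hw
  have hrange : (Ideal.span {w} : Submodule (AndersonRing R) (AndersonRing R))
      = LinearMap.range (LinearMap.toSpanSingleton (AndersonRing R) (AndersonRing R) w) :=
    LinearMap.span_singleton_eq_range (AndersonRing R) (AndersonRing R) w
  have hker : LinearMap.ker (LinearMap.toSpanSingleton (AndersonRing R) (AndersonRing R) w)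
      = Ideal.span {c} := by
    ext z
    simp only [LinearMap.mem_ker, LinearMap.toSpanSingleton_apply, smul_eq_mul,
      Ideal.mem_span_singleton']
    constructor
    · intro h
      obtain ⟨y, hy⟩ := (hann z).mp (by rw [mul_comm]; exact h)
      exact ⟨y, by rw [hy]; ring⟩
    · rintro ⟨y, rfl⟩
      have := (hann (y * c)).mpr ⟨y, by ring⟩
      rw [mul_comm] at this
      exact this
  have hproj : Module.Projective (AndersonRing R)
      ((AndersonRing R) ⧸ (Ideal.span {c} : Submodule (AndersonRing R) (AndersonRing R))) := by
    have hle : (Ideal.span {c} : Submodule (AndersonRing R) (AndersonRing R))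
        ≤ LinearMap.ker ((LinearMap.lsmul (AndersonRing R) (AndersonRing R)).flip (1 - c)) := by
      rw [Ideal.span_le]
      intro z hz
      rw [Set.mem_singleton_iff] at hz
      simp only [SetLike.mem_coe, LinearMap.mem_ker, LinearMap.flip_apply, LinearMap.lsmul_apply,
        smul_eq_mul]
      rw [hz]
      linear_combination -hc
    refine Module.Projective.of_split (M := AndersonRing R)
      (Submodule.liftQ _ ((LinearMap.lsmul (AndersonRing R) (AndersonRing R)).flip (1 - c)) hle)
      (Ideal.span {c} : Submodule (AndersonRing R) (AndersonRing R)).mkQ ?_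
    refine LinearMap.ext fun z => ?_
    refine Submodule.Quotient.induction_on _ z fun a => ?_
    simp only [LinearMap.comp_apply, Submodule.mkQ_apply, Submodule.liftQ_apply,
      LinearMap.flip_apply, LinearMap.lsmul_apply, smul_eq_mul, LinearMap.id_apply]
    rw [Submodule.Quotient.eq]
    exact Ideal.mem_span_singleton'.mpr ⟨-a, by ring⟩
  have e := (LinearMap.toSpanSingleton (AndersonRing R) (AndersonRing R) w).quotKerEquivRange
  rw [hker] at e
  have hproj2 := Module.Projective.of_equiv e
  rw [hrange]
  exact hproj2

end Special

section Gcd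

variable {R : Type*} [CommRing R]

local notation "ι" => algebraMap (Polynomial R) (AndersonRing R)

/-- a two-generated ideal with special generators is generated by a single special element -/
lemma special_gcd {w : AndersonRing R} (hw : IsSpecial w) :
    ∀ v : AndersonRing R, IsSpecial v → ∃ w₃ : AndersonRing R, IsSpecial w₃ ∧
      Ideal.span {w, v} = Ideal.span {w₃} := by
  induction hw with
  | zero =>
      intro v hv
      refine ⟨v, hv, ?_⟩
      rw [show ({0, v} : Set (AndersonRing R)) = insert 0 {v} from rfl, Ideal.span_insert,
        show Ideal.span {(0:AndersonRing R)} = ⊥ by simp, bot_sup_eq]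
  | step e w₁ he hw₁ ih =>
      intro v hv
      cases hv with
      | zero =>
          refine ⟨e + (1 - e) * ι X * w₁, IsSpecial.step e w₁ he hw₁, ?_⟩
          rw [Set.pair_comm]
          rw [show ({0, e + (1 - e) * ι X * w₁} : Set (AndersonRing R))
              = insert 0 {e + (1 - e) * ι X * w₁} from rfl, Ideal.span_insert,
            show Ideal.span {(0:AndersonRing R)} = ⊥ by simp, bot_sup_eq]
      | step d v₁ hd hv₁ =>
          obtain ⟨w₂, hw₂sp, hspan⟩ := ih v₁ hv₁
          obtain ⟨t, ht⟩ : ∃ t, w₁ = t * w₂ := by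
            have : w₁ ∈ Ideal.span ({w₂} : Set (AndersonRing R)) := by
              rw [← hspan]
              exact Ideal.subset_span (by simp)
            obtain ⟨t, ht⟩ := Ideal.mem_span_singleton'.mp this
            exact ⟨t, ht.symm⟩
          obtain ⟨t', ht'⟩ : ∃ t', v₁ = t' * w₂ := by
            have : v₁ ∈ Ideal.span ({w₂} : Set (AndersonRing R)) := by
              rw [← hspan]
              exact Ideal.subset_span (by simp)
            obtain ⟨t', ht'⟩ := Ideal.mem_span_singleton'.mp this
            exact ⟨t', ht'.symm⟩
          obtain ⟨a, b, hab⟩ : ∃ a b, a * w₁ + b * v₁ = w₂ := by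
            have : w₂ ∈ Ideal.span ({w₁, v₁} : Set (AndersonRing R)) := by
              rw [hspan]
              exact Ideal.subset_span (by simp)
            exact Ideal.mem_span_pair.mp this
          set p : AndersonRing R := e + d - e * d with hp_def
          have hp : p * p = p := by
            rw [hp_def]
            linear_combination (1 - 2*d + d^2) * he + (1 - e) * hd
          refine ⟨p + (1 - p) * ι X * w₂, IsSpecial.step p w₂ hp hw₂sp, ?_⟩
          apply le_antisymm
          · rw [Ideal.span_le]
            rintro y (rfl | rfl)
            · refine SetLike.mem_coe.mpr (Ideal.mem_span_singleton'.mpr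
                ⟨e + (1 - e) * d * ι X * t * w₂ + (1 - p) * t, ?_⟩)
              rw [hp_def, ht]
              linear_combination (1 - t - (ι X)*w₂ + (ι X)*w₂*t - d + (2)*d*t + d*(ι X)*w₂ + (-3)*d*(ι X)*w₂*t + d*(ι X)^2*w₂^2*t - d^2*t + (2)*d^2*(ι X)*w₂*t - d^2*(ι X)^2*w₂^2*t) * he + (-t + (2)*(ι X)*w₂*t - (ι X)^2*w₂^2*t + e*t + (-2)*e*(ι X)*w₂*t + e*(ι X)^2*w₂^2*t) * hd
            · refine SetLike.mem_coe.mpr (Ideal.mem_span_singleton'.mpr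
                ⟨d + (1 - d) * e * ι X * t' * w₂ + (1 - p) * t', ?_⟩)
              rw [hp_def, ht']
              linear_combination (-t' + (2)*(ι X)*w₂*t' - (ι X)^2*w₂^2*t' + (2)*d*t' + (-4)*d*(ι X)*w₂*t' + (2)*d*(ι X)^2*w₂^2*t' - d^2*t' + (2)*d^2*(ι X)*w₂*t' - d^2*(ι X)^2*w₂^2*t') * he + (1 - t' - (ι X)*w₂ + (ι X)*w₂*t' - e + e*t' + e*(ι X)*w₂ - e*(ι X)*w₂*t') * hd
          · rw [Ideal.span_le]
            rintro y rfl
            refine SetLike.mem_coe.mpr (Ideal.mem_span_pair.mpr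
              ⟨e + a * (1 - p), (1 - e) * d + b * (1 - p), ?_⟩)
            rw [hp_def]
            linear_combination (1 - a - (ι X)*w₁ + (ι X)*w₁*a + d*a - d*(ι X)*w₁*a) * he + (1 - b - (ι X)*v₁ + (ι X)*v₁*b - e + e*b + e*(ι X)*v₁ - e*(ι X)*v₁*b) * hd + ((1 - e - d + e*d)*(ι X)) * hab

end Gcd

section Canon

variable {R : Type*} [CommRing R]

local notation "ι" => algebraMap (Polynomial R) (AndersonRing R)

lemma canon_step (f : R[X]) {b : R} (hb : (f.coeff 0) ^ 2 * b = f.coeff 0)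
    (h : ∃ w' u' : AndersonRing R, IsSpecial w' ∧ IsUnit u' ∧ ι f.divX = w' * u') :
    ∃ w u : AndersonRing R, IsSpecial w ∧ IsUnit u ∧ ι f = w * u := by
  obtain ⟨w', u', hw', hu', heq⟩ := h
  set a : R := f.coeff 0 with ha_def
  set e₀ : R := a * b with he₀_def
  have he₀R : e₀ * e₀ = e₀ := by rw [he₀_def]; linear_combination b * hb
  set g : R[X] := C e₀ * f + 1 - C e₀ with hg_def
  have hg0 : g.coeff 0 = e₀ * a + 1 - e₀ := by
    rw [hg_def]
    simp [coeff_C, ha_def]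
  have hgu : IsUnit (ι g) := by
    apply isUnit_iota_of_coeff_zero
    rw [hg0]
    refine IsUnit.of_mul_eq_one (e₀ * b + 1 - e₀) ?_
    rw [he₀_def]
    linear_combination ((2)*b - b^2 - a*b + a*b^2) * hb
  set E : AndersonRing R := ι (C e₀) with hE_def
  have hE : E * E = E := by
    rw [hE_def, ← map_mul, ← C_mul, he₀R]
  have hCe : C e₀ * C e₀ = C e₀ := by rw [← C_mul, he₀R]
  have hCa : C e₀ * C a = C a := by
    rw [← C_mul]
    congr 1
    rw [he₀_def]
    linear_combination hb
  have key1 : E * ι g = E * ι f := by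
    rw [hE_def, ← map_mul, ← map_mul]
    congr 1
    rw [hg_def]
    linear_combination (f - 1) * hCe
  have key2 : (1 - E) * ι f = (1 - E) * (ι X * ι f.divX) := by
    have hXd : X * f.divX + C a = f := X_mul_divX_add f
    have hpoly : (1 - C e₀) * f = (1 - C e₀) * (X * f.divX) := by
      linear_combination (C e₀ - 1) * hXd - hCa
    have := congrArg (fun p : R[X] => ι p) hpoly
    simp only [map_mul, map_sub, map_one] at this
    rw [hE_def]
    exact this
  obtain ⟨vg, hvg⟩ := hgu.exists_right_inv
  obtain ⟨vu, hvu⟩ := hu'.exists_right_inv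
  refine ⟨E + (1 - E) * ι X * w', E * ι g + (1 - E) * u', IsSpecial.step E w' hE hw', ?_, ?_⟩
  · refine IsUnit.of_mul_eq_one (E * vg + (1 - E) * vu) ?_
    linear_combination (u' * vu - u' * vg - (ι g) * vu + (ι g) * vg) * hE + E * hvg + (1 - E) * hvu
  · linear_combination (u' - u' * (ι X) * w' - (ι g) + (ι g) * (ι X) * w') * hE - key1 + key2 + ((ι X) - E * (ι X)) * heq

lemma canon (hvnr : ∀ a : R, ∃ b : R, a ^ 2 * b = a) :
    ∀ (n : ℕ) (f : R[X]), f.natDegree ≤ n →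
      ∃ w u : AndersonRing R, IsSpecial w ∧ IsUnit u ∧ ι f = w * u := by
  intro n
  induction n with
  | zero =>
      intro f hf
      obtain ⟨b, hb⟩ := hvnr (f.coeff 0)
      refine canon_step f hb ⟨0, 1, IsSpecial.zero, isUnit_one, ?_⟩
      have : f.divX = 0 := by
        rw [Polynomial.eq_C_of_natDegree_le_zero hf]
        exact divX_C _
      rw [this, map_zero, zero_mul]
  | succ n ih =>
      intro f hf
      obtain ⟨b, hb⟩ := hvnr (f.coeff 0)
      refine canon_step f hb ?_
      apply ih
      rw [Polynomial.natDegree_divX_eq_natDegree_tsub_one]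
      omega

end Canon

section Forward

variable {R : Type*} [CommRing R]

local notation "ι" => algebraMap (Polynomial R) (AndersonRing R)

lemma span_singleton_special (hvnr : ∀ a : R, ∃ b : R, a ^ 2 * b = a) (z : AndersonRing R) :
    ∃ w : AndersonRing R, IsSpecial w ∧ Ideal.span {z} = Ideal.span {w} := by
  obtain ⟨s, g, hsg⟩ := exists_denom z
  obtain ⟨w, u, hw, hu, heq⟩ := canon hvnr g.natDegree g le_rfl
  have hus : IsUnit (ι (s : R[X])) := IsLocalization.map_units _ s
  obtain ⟨v, hv⟩ := hus.exists_right_inv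
  have hz : z = w * (u * v) := by
    calc z = z * (ι (s : R[X]) * v) := by rw [hv, mul_one]
    _ = (z * ι (s : R[X])) * v := by ring
    _ = (w * u) * v := by rw [hsg, heq]
    _ = w * (u * v) := by ring
  have huv : IsUnit (u * v) := by
    refine isUnit_of_mul_isUnit_left (y := ι (s : R[X])) ?_
    have : u * v * ι (s : R[X]) = u * (ι (s : R[X]) * v) := by ring
    rw [this, hv, mul_one]
    exact hu
  rw [hz]
  exact ⟨w, hw, Ideal.span_singleton_mul_right_unit huv w⟩

lemma span_finset_special (hvnr : ∀ a : R, ∃ b : R, a ^ 2 * b = a)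
    (s : Finset (AndersonRing R)) :
    ∃ w : AndersonRing R, IsSpecial w ∧ Ideal.span (s : Set (AndersonRing R)) = Ideal.span {w} := by
  classical
  induction s using Finset.induction_on with
  | empty =>
      refine ⟨0, IsSpecial.zero, ?_⟩
      rw [Finset.coe_empty, Ideal.span_empty, Ideal.span_singleton_eq_bot.mpr rfl]
  | insert _ _ ha ih =>
      rename_i z s'
      obtain ⟨ws, hws, hspan⟩ := ih
      obtain ⟨wz, hwz, hspanz⟩ := span_singleton_special hvnr z
      obtain ⟨w₃, hw₃, hgcd⟩ := special_gcd hwz ws hws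
      refine ⟨w₃, hw₃, ?_⟩
      rw [Finset.coe_insert, Ideal.span_insert, hspan, hspanz, ← hgcd]
      rw [show ({wz, ws} : Set (AndersonRing R)) = insert wz {ws} from rfl, Ideal.span_insert]

theorem forward_direction (hvnr : ∀ a : R, ∃ b : R, a ^ 2 * b = a)
    (I : Ideal (AndersonRing R)) (hI : I.FG) : Module.Projective (AndersonRing R) I := by
  obtain ⟨s, hs⟩ := hI
  obtain ⟨w, hw, hspan⟩ := span_finset_special hvnr s
  have : I = Ideal.span {w} := by rw [← hs, hspan]
  rw [this]
  exact special_projective hw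

end Forward

section Converse

variable {R : Type*} [CommRing R]

local notation "ι" => algebraMap (Polynomial R) (AndersonRing R)

theorem converse_direction
    (h : ∀ I : Ideal (AndersonRing R), I.FG → Module.Projective (AndersonRing R) I)
    (a : R) : ∃ b : R, a ^ 2 * b = a := by
  classical
  set aL : AndersonRing R := ι (C a) with haL
  set x : AndersonRing R := ι X with hx
  set I : Ideal (AndersonRing R) := Ideal.span {aL, x} with hI
  have hmemA : aL ∈ I := Ideal.subset_span (by simp)
  have hmemX : x ∈ I := Ideal.subset_span (by simp)
  have hFG : I.FG := ⟨{aL, x}, by simp [hI]⟩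
  have hproj := h I hFG
  -- the surjection (L × L) → I
  let ψ : (AndersonRing R × AndersonRing R) →ₗ[AndersonRing R] AndersonRing R :=
    { toFun := fun z => z.1 * aL + z.2 * x
      map_add' := by intro z w; simp [Prod.fst_add, Prod.snd_add]; ring
      map_smul' := by intro c z; simp [smul_eq_mul]; ring }
  have hmem : ∀ z, ψ z ∈ I := fun z =>
    I.add_mem (I.mul_mem_left _ hmemA) (I.mul_mem_left _ hmemX)
  let φ : (AndersonRing R × AndersonRing R) →ₗ[AndersonRing R] I :=
    LinearMap.codRestrict (I.restrictScalars (AndersonRing R)) ψ hmem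
  have hsurj : Function.Surjective φ := by
    rintro ⟨y, hy⟩
    obtain ⟨u, v, huv⟩ := Ideal.mem_span_pair.mp (hI ▸ hy)
    exact ⟨(u, v), Subtype.ext huv⟩
  obtain ⟨σ, hσ⟩ := Module.projective_lifting_property φ LinearMap.id hsurj
  set A₁ : I := ⟨aL, hmemA⟩
  set X₁ : I := ⟨x, hmemX⟩
  have e₁ : (σ A₁).1 * aL + (σ A₁).2 * x = aL := by
    have := congrArg Subtype.val (LinearMap.congr_fun hσ A₁)
    exact this
  have e₂ : (σ X₁).1 * aL + (σ X₁).2 * x = x := by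
    exact congrArg Subtype.val (LinearMap.congr_fun hσ X₁)
  have e₃ : x • A₁ = aL • X₁ := by
    apply Subtype.ext
    show x * aL = aL * x
    ring
  have e₄ : x * (σ A₁).1 = aL * (σ X₁).1 := by
    have := congrArg (fun z => (z : AndersonRing R × AndersonRing R).1) (congrArg σ e₃)
    simpa [map_smul, smul_eq_mul] using this
  have key : aL * x = (σ X₁).1 * (aL * aL) + (σ A₁).2 * (x * x) := by
    linear_combination (-x) * e₁ + aL * e₄
  obtain ⟨s₁, g₁, h₁⟩ := exists_denom ((σ X₁).1)
  obtain ⟨s₂, g₂, h₂⟩ := exists_denom ((σ A₁).2)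
  have hbig : ι (C a * X * ((s₁ : R[X]) * (s₂ : R[X])))
      = ι (C a * C a * g₁ * (s₂ : R[X]) + X * X * g₂ * (s₁ : R[X])) := by
    simp only [map_mul, map_add]
    rw [← haL, ← hx]
    linear_combination (ι (s₁ : R[X]) * ι (s₂ : R[X])) * key
      + (aL * aL * ι (s₂ : R[X])) * h₁ + (x * x * ι (s₁ : R[X])) * h₂
  obtain ⟨c, hc⟩ := (IsLocalization.eq_iff_exists (andersonSubmonoid R) (AndersonRing R)).mp hbig
  have hc0 : (c : R[X]).coeff 0 = 1 := c.property
  have hs10 : (s₁ : R[X]).coeff 0 = 1 := s₁.property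
  have hs20 : (s₂ : R[X]).coeff 0 = 1 := s₂.property
  refine ⟨((c : R[X]) * g₁ * (s₂ : R[X])).coeff 1, ?_⟩
  have hcoeff := congrArg (fun p : R[X] => p.coeff 1) hc
  have lhs_eq : (c : R[X]) * (C a * X * ((s₁ : R[X]) * (s₂ : R[X])))
      = C a * (X * ((c : R[X]) * (s₁ : R[X]) * (s₂ : R[X]))) := by ring
  have rhs_eq : (c : R[X]) * (C a * C a * g₁ * (s₂ : R[X]) + X * X * g₂ * (s₁ : R[X]))
      = C a * (C a * ((c : R[X]) * g₁ * (s₂ : R[X]))) + X * (X * ((c : R[X]) * g₂ * (s₁ : R[X]))) := by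
    ring
  rw [lhs_eq, rhs_eq] at hcoeff
  have hl : (C a * (X * ((c : R[X]) * (s₁ : R[X]) * (s₂ : R[X])))).coeff 1 = a := by
    rw [coeff_C_mul]
    rw [show (1 : ℕ) = 0 + 1 from rfl, coeff_X_mul]
    rw [mul_coeff_zero, mul_coeff_zero, hc0, hs10, hs20]
    ring
  have hr : (C a * (C a * ((c : R[X]) * g₁ * (s₂ : R[X]))) +
      X * (X * ((c : R[X]) * g₂ * (s₁ : R[X])))).coeff 1
      = a ^ 2 * ((c : R[X]) * g₁ * (s₂ : R[X])).coeff 1 := by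
    rw [coeff_add, coeff_C_mul, coeff_C_mul]
    rw [show (1 : ℕ) = 0 + 1 from rfl, coeff_X_mul, mul_coeff_zero, coeff_X_zero]
    ring
  rw [hl, hr] at hcoeff
  linear_combination hcoeff.symm

end Converse

/-- `R` is von Neumann regular iff the Anderson ring `R[X]_A` is
semi-hereditary (every finitely generated ideal is projective). -/
theorem anderson_vnr_iff_semihereditary (R : Type*) [CommRing R] :
    (∀ a : R, ∃ b : R, a ^ 2 * b = a) ↔
    (∀ I : Ideal (AndersonRing R), I.FG → Module.Projective (AndersonRing R) I) :=
  ⟨fun hvnr I hI => forward_direction hvnr I hI, fun h a => converse_direction h a⟩
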